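/- There is no transformation tr' mapping every ground HDLP Π to a ground positive DLP tr'(Π) that is modular, i.e., tr'(Π) = ⋃_{r ∈ Π} tr'({r}) for every ground HDLP Π, and satisfies property T1: for every ground HDLP Π that has an answer set, (i) for every answer set S' of tr'(Π), the set { l : inS(l) ∈ S' } is an answer set of Π, and (ii) for every answer set S of Π there is an answer set S' of tr'(Π) with S = { l : inS(l) ∈ S' }; here inS(·) is a fixed injective encoding of literals of the source language as atoms of the target language. -/

import Mathlib

open scoped Classical

namespace ASP

universe u v

/-- A ground literal: an atom together with a sign
(`true` for the atom itself, `false` for its strong negation `¬a`).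
The atom `|l|` of a literal `l` is its first component `l.1`. -/
abbrev Lit (α : Type u) : Type u := α × Bool

/-- A ground disjunctive rule, consisting of three finite sets of literals:
head, positive body and negative body. -/
structure Rule (α : Type u) : Type u where
  head : Finset (Lit α)
  pbody : Finset (Lit α)
  nbody : Finset (Lit α)
deriving DecidableEq

variable {α : Type u}

/-- A set of literals is consistent if it contains no atom together with
its strong negation. -/
def Consistent (S : Set (Lit α)) : Prop :=
  ∀ a : α, ¬((a, true) ∈ S ∧ (a, false) ∈ S)

/-- `S` satisfies a rule `r`: the head intersects `S` whenever
`pbody(r) ⊆ S` and `nbody(r) ∩ S = ∅`. -/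
def SatRule (S : Set (Lit α)) (r : Rule α) : Prop :=
  ((∀ l ∈ r.pbody, l ∈ S) ∧ (∀ l ∈ r.nbody, l ∉ S)) → ∃ l ∈ r.head, l ∈ S

/-- Answer sets of a positive program: `⊆`-minimal consistent sets of
literals satisfying all rules. -/
def IsAnswerSetPos (P : Set (Rule α)) (S : Set (Lit α)) : Prop :=
  Consistent S ∧ (∀ r ∈ P, SatRule S r) ∧
    ∀ T : Set (Lit α), Consistent T → (∀ r ∈ P, SatRule T r) → T ⊆ S → T = S

/-- The reduct `P^S` of a program w.r.t. a set of literals `S`. -/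
def reduct (P : Set (Rule α)) (S : Set (Lit α)) : Set (Rule α) :=
  {x | ∃ r ∈ P, (∀ l ∈ r.nbody, l ∉ S) ∧ x = ⟨r.head, r.pbody, ∅⟩}

/-- `S` is an answer set of `P` iff `S` is an answer set of the positive
program `P^S`. -/
def IsAnswerSet (P : Set (Rule α)) (S : Set (Lit α)) : Prop :=
  IsAnswerSetPos (reduct P S) S

/-- `Lit(P)`: the literals occurring in a program. -/
def litsOf (P : Set (Rule α)) : Set (Lit α) :=
  {l | ∃ r ∈ P, l ∈ r.head ∨ l ∈ r.pbody ∨ l ∈ r.nbody}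

/-- Edges of the positive dependency graph: from each head literal of a
rule to each of its positive body literals. -/
def DepEdge (P : Set (Rule α)) (l l' : Lit α) : Prop :=
  ∃ r ∈ P, l ∈ r.head ∧ l' ∈ r.pbody

/-- Head-cycle freeness: no two distinct literals occurring together in
some rule head lie on a common cycle of the positive dependency graph. -/
def HeadCycleFree (P : Set (Rule α)) : Prop :=
  ∀ r ∈ P, ∀ l ∈ r.head, ∀ l' ∈ r.head, l ≠ l' →
    ¬(Relation.ReflTransGen (DepEdge P) l l' ∧ Relation.ReflTransGen (DepEdge P) l' l)

/-- `P ∪ S`: the program `P` extended with the literals of `S` as facts. -/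
def withFacts (P : Set (Rule α)) (S : Set (Lit α)) : Set (Rule α) :=
  P ∪ {x | ∃ l ∈ S, x = ⟨{l}, ∅, ∅⟩}

section Aux

variable {γ : Type*}

lemma rule_eq_of_nbody (r : Rule γ) (h : r.nbody = ∅) :
    (⟨r.head, r.pbody, ∅⟩ : Rule γ) = r := by
  cases r; simp_all

lemma reduct_eq_of_pos (P : Set (Rule γ)) (S : Set (Lit γ))
    (hpos : ∀ r ∈ P, r.nbody = ∅) : reduct P S = P := by
  ext x
  constructor
  · rintro ⟨r, hr, -, rfl⟩
    rw [rule_eq_of_nbody r (hpos r hr)]; exact hr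
  · intro hx
    exact ⟨x, hx, by simp [hpos x hx], (rule_eq_of_nbody x (hpos x hx)).symm⟩

lemma isAnswerSet_iff_pos (P : Set (Rule γ)) (S : Set (Lit γ))
    (hpos : ∀ r ∈ P, r.nbody = ∅) : IsAnswerSet P S ↔ IsAnswerSetPos P S := by
  unfold IsAnswerSet
  rw [reduct_eq_of_pos P S hpos]

lemma hcf_of_empty_pbody (P : Set (Rule γ)) (hp : ∀ r ∈ P, r.pbody = ∅) :
    HeadCycleFree P := by
  rintro r hr l hl l' hl' hne ⟨h1, -⟩
  apply hne
  rcases h1.cases_head with h | ⟨c, ⟨r0, hr0, -, hc⟩, -⟩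
  · exact h
  · rw [hp r0 hr0] at hc; simp at hc

/-- A consistent model of a positive program contains a minimal consistent
model, i.e. an answer set of the positive program. -/
lemma exists_min_model (P : Set (Rule γ)) (S : Set (Lit γ))
    (hpos : ∀ r ∈ P, r.nbody = ∅) (hcons : Consistent S)
    (hsat : ∀ r ∈ P, SatRule S r) :
    ∃ M, M ⊆ S ∧ IsAnswerSetPos P M := by
  classical
  set 𝒮 : Set (Set (Lit γ)) :=
    {T | T ⊆ S ∧ Consistent T ∧ ∀ r ∈ P, SatRule T r} with h𝒮
  have hSmem : S ∈ 𝒮 := ⟨subset_rfl, hcons, hsat⟩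
  have hzorn : ∃ m, m ⊆ S ∧ Minimal (· ∈ 𝒮) m := by
    apply zorn_superset_nonempty
    · intro c hc𝒮 hchain hne
      refine ⟨⋂₀ c, ⟨?_, ?_, ?_⟩, fun s hs => Set.sInter_subset_of_mem hs⟩
      · obtain ⟨T0, hT0⟩ := hne
        exact (Set.sInter_subset_of_mem hT0).trans (hc𝒮 hT0).1
      · obtain ⟨T0, hT0⟩ := hne
        intro a' ⟨h1, h2⟩
        exact (hc𝒮 hT0).2.1 a'
          ⟨Set.sInter_subset_of_mem hT0 h1, Set.sInter_subset_of_mem hT0 h2⟩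
      · intro r hr ⟨hp, hn⟩
        by_contra hcon
        push_neg at hcon
        have hchoice : ∀ l ∈ r.head, ∃ T, T ∈ c ∧ l ∉ T := by
          intro l hl
          have := hcon l hl
          rw [Set.mem_sInter] at this
          push_neg at this
          exact this
        set g : Lit γ → Set (Lit γ) :=
          fun l => if h : ∃ T, T ∈ c ∧ l ∉ T then h.choose else ∅ with hgdef
        have hg : ∀ l ∈ r.head, g l ∈ c ∧ l ∉ g l := by
          intro l hl
          have h := hchoice l hl
          simp only [hgdef, dif_pos h]
          exact h.choose_spec
        -- first a member of the chain to get head nonempty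
        obtain ⟨T0, hT0⟩ := hne
        have hsatT0 : SatRule T0 r := (hc𝒮 hT0).2.2 r hr
        obtain ⟨l0, hl0, -⟩ := hsatT0
          ⟨fun l hl => Set.sInter_subset_of_mem hT0 (hp l hl),
           by rw [hpos r hr]; intro l hl; simp at hl⟩
        have hsfin : (g '' (r.head : Set (Lit γ))).Finite :=
          (r.head : Set (Lit γ)).toFinite.image g
        have hsne : (g '' (r.head : Set (Lit γ))).Nonempty :=
          ⟨g l0, Set.mem_image_of_mem g hl0⟩
        obtain ⟨m, hm, hmin⟩ :=
          (by obtain ⟨m, hm⟩ := hsfin.exists_minimal hsne; exact ⟨m, hm.1, fun y hy hle => le_antisymm (hm.2 hy hle) hle⟩ :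
            ∃ m ∈ g '' (r.head : Set (Lit γ)), ∀ y ∈ g '' (r.head : Set (Lit γ)), y ≤ m → m = y)
        obtain ⟨lm, hlm, rfl⟩ := hm
        have hmc : g lm ∈ c := (hg lm hlm).1
        have hsatm : SatRule (g lm) r := (hc𝒮 hmc).2.2 r hr
        obtain ⟨l, hl, hlm'⟩ := hsatm
          ⟨fun l' hl' => Set.sInter_subset_of_mem hmc (hp l' hl'),
           by rw [hpos r hr]; intro l' hl'; simp at hl'⟩
        have hglc : g l ∈ c := (hg l hl).1
        have hgl : l ∉ g l := (hg l hl).2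
        rcases eq_or_ne (g l) (g lm) with heq | hne'
        · exact hgl (heq ▸ hlm')
        · rcases hchain.total hglc hmc with h | h
          · have h2 : g lm = g l := hmin (g l) (Set.mem_image_of_mem g hl) h
            exact hgl (h2 ▸ hlm')
          · exact hgl (h hlm')
    · exact hSmem
  obtain ⟨m, hmS, hmin⟩ := hzorn
  refine ⟨m, hmS, hmin.1.2.1, hmin.1.2.2, ?_⟩
  intro T hTc hTs hTm
  have hT𝒮 : T ∈ 𝒮 := ⟨hTm.trans hmS, hTc, hTs⟩
  exact le_antisymm hTm (hmin.2 hT𝒮 hTm)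

end Aux

/-- There is no modular transformation of ground HDLPs into ground positive
DLPs satisfying property T1, where `enc` is a fixed injective encoding of
source literals as target atoms (so `inS(l) ∈ S'` reads `(enc l, true) ∈ S'`). -/
theorem statement5 {α : Type u} {β : Type v} (a b : α) (hab : a ≠ b)
    (enc : Lit α → β) (hinj : Function.Injective enc) :
    ¬∃ tr' : Set (Rule α) → Set (Rule β),
      (∀ P : Set (Rule α), P.Finite → HeadCycleFree P →
        (tr' P).Finite ∧ (∀ r ∈ tr' P, r.nbody = ∅)) ∧
      (∀ P : Set (Rule α), P.Finite → HeadCycleFree P →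
        tr' P = ⋃ r ∈ P, tr' {r}) ∧
      (∀ P : Set (Rule α), P.Finite → HeadCycleFree P →
        (∃ S, IsAnswerSet P S) →
        ((∀ S', IsAnswerSet (tr' P) S' →
            IsAnswerSet P {l : Lit α | (enc l, true) ∈ S'}) ∧
         (∀ S, IsAnswerSet P S →
            ∃ S', IsAnswerSet (tr' P) S' ∧ S = {l : Lit α | (enc l, true) ∈ S'}))) := by
  classical
  rintro ⟨tr', hpos, hmod, hT1⟩
  -- literals and rules
  set la : Lit α := (a, true) with hla
  set lb : Lit α := (b, true) with hlb
  have hlab : la ≠ lb := by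
    simp [hla, hlb, Prod.ext_iff, hab]
  -- the rule  a ← not b  and the fact  b ←
  set r : Rule α := ⟨{la}, ∅, {lb}⟩ with hr
  set fb : Rule α := ⟨{lb}, ∅, ∅⟩ with hfb
  set P1 : Set (Rule α) := {r} with hP1
  set P2 : Set (Rule α) := {r, fb} with hP2
  have hP1fin : P1.Finite := Set.finite_singleton r
  have hP2fin : P2.Finite := (Set.finite_singleton fb).insert r
  have hP1hcf : HeadCycleFree P1 := by
    apply hcf_of_empty_pbody
    intro r0 hr0
    rw [hP1, Set.mem_singleton_iff] at hr0
    subst hr0; rfl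
  have hP2hcf : HeadCycleFree P2 := by
    apply hcf_of_empty_pbody
    intro r0 hr0
    rw [hP2, Set.mem_insert_iff, Set.mem_singleton_iff] at hr0
    rcases hr0 with rfl | rfl <;> rfl
  have hconsA : Consistent ({la} : Set (Lit α)) := by
    intro a' ⟨h1, h2⟩
    rw [Set.mem_singleton_iff, hla, Prod.ext_iff] at h2
    simp at h2
  have hconsB : Consistent ({lb} : Set (Lit α)) := by
    intro a' ⟨h1, h2⟩
    rw [Set.mem_singleton_iff, hlb, Prod.ext_iff] at h2
    simp at h2
  -- {la} is an answer set of P1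
  have hA : IsAnswerSet P1 {la} := by
    have hmem : (⟨{la}, ∅, ∅⟩ : Rule α) ∈ reduct P1 ({la} : Set (Lit α)) := by
      refine ⟨r, rfl, ?_, by rw [hr]⟩
      intro l hl
      rw [hr] at hl
      simp only [Finset.mem_singleton] at hl
      subst hl
      rw [Set.mem_singleton_iff]
      exact fun h => hlab (h.symm)
    refine ⟨hconsA, ?_, ?_⟩
    · rintro x ⟨r0, hr0, hcond, rfl⟩
      rw [hP1, Set.mem_singleton_iff] at hr0
      subst hr0
      intro _
      exact ⟨la, by rw [hr]; simp, rfl⟩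
    · intro T hTc hTs hTsub
      have hlaT : la ∈ T := by
        obtain ⟨l, hl, hlT⟩ := hTs _ hmem ⟨by simp, by simp⟩
        simp only [Finset.mem_singleton] at hl
        subst hl
        exact hlT
      exact le_antisymm hTsub (by intro x hx; rw [Set.mem_singleton_iff] at hx; subst hx; exact hlaT)
  -- every answer set of P1 equals {la}
  have hB : ∀ S, IsAnswerSet P1 S → S = ({la} : Set (Lit α)) := by
    intro S hS
    obtain ⟨hSc, hSs, hSmin⟩ := hS
    by_cases hlbS : lb ∈ S
    · -- reduct is empty, so S must be empty: contradiction with lb ∈ S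
      have : (∅ : Set (Lit α)) = S := by
        apply hSmin
        · intro a' ⟨h1, _⟩; exact h1
        · rintro x ⟨r0, hr0, hcond, rfl⟩
          rw [hP1, Set.mem_singleton_iff] at hr0
          subst hr0
          exact absurd hlbS (hcond lb (by rw [hr]; simp))
        · exact Set.empty_subset S
      rw [← this] at hlbS
      exact absurd hlbS (Set.notMem_empty lb)
    · have hmem : (⟨{la}, ∅, ∅⟩ : Rule α) ∈ reduct P1 S := by
        refine ⟨r, rfl, ?_, by rw [hr]⟩
        intro l hl
        rw [hr] at hl
        simp only [Finset.mem_singleton] at hl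
        subst hl
        exact hlbS
      have hlaS : la ∈ S := by
        obtain ⟨l, hl, hlS⟩ := hSs _ hmem ⟨by simp, by simp⟩
        simp only [Finset.mem_singleton] at hl
        subst hl
        exact hlS
      refine (hSmin {la} hconsA ?_ ?_).symm
      · rintro x ⟨r0, hr0, hcond, rfl⟩
        rw [hP1, Set.mem_singleton_iff] at hr0
        subst hr0
        intro _
        exact ⟨la, by rw [hr]; simp, rfl⟩
      · intro x hx
        rw [Set.mem_singleton_iff] at hx
        subst hx
        exact hlaS
  -- {lb} is an answer set of P2
  have hC : IsAnswerSet P2 {lb} := by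
    have hmem : (⟨{lb}, ∅, ∅⟩ : Rule α) ∈ reduct P2 ({lb} : Set (Lit α)) := by
      refine ⟨fb, by rw [hP2]; simp, ?_, by rw [hfb]⟩
      intro l hl
      rw [hfb] at hl
      simp at hl
    refine ⟨hconsB, ?_, ?_⟩
    · rintro x ⟨r0, hr0, hcond, rfl⟩
      rw [hP2, Set.mem_insert_iff, Set.mem_singleton_iff] at hr0
      rcases hr0 with rfl | rfl
      · exact absurd rfl (hcond lb (by rw [hr]; simp))
      · intro _
        exact ⟨lb, by rw [hfb]; simp, rfl⟩
    · intro T hTc hTs hTsub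
      have hlbT : lb ∈ T := by
        obtain ⟨l, hl, hlT⟩ := hTs _ hmem ⟨by simp, by simp⟩
        simp only [Finset.mem_singleton] at hl
        subst hl
        exact hlT
      exact le_antisymm hTsub (by intro x hx; rw [Set.mem_singleton_iff] at hx; subst hx; exact hlbT)
  -- every answer set of P2 equals {lb}
  have hD : ∀ S, IsAnswerSet P2 S → S = ({lb} : Set (Lit α)) := by
    intro S hS
    obtain ⟨hSc, hSs, hSmin⟩ := hS
    have hfbmem : (⟨{lb}, ∅, ∅⟩ : Rule α) ∈ reduct P2 S := by
      refine ⟨fb, by rw [hP2]; simp, ?_, by rw [hfb]⟩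
      intro l hl
      rw [hfb] at hl
      simp at hl
    have hlbS : lb ∈ S := by
      obtain ⟨l, hl, hlS⟩ := hSs _ hfbmem ⟨by simp, by simp⟩
      simp only [Finset.mem_singleton] at hl
      subst hl
      exact hlS
    refine (hSmin {lb} hconsB ?_ ?_).symm
    · rintro x ⟨r0, hr0, hcond, rfl⟩
      rw [hP2, Set.mem_insert_iff, Set.mem_singleton_iff] at hr0
      rcases hr0 with rfl | rfl
      · exact absurd hlbS (hcond lb (by rw [hr]; simp))
      · intro _
        exact ⟨lb, by rw [hfb]; simp, rfl⟩
    · intro x hx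
      rw [Set.mem_singleton_iff] at hx
      subst hx
      exact hlbS
  -- use T1 for P2: get an answer set S' of tr' P2 projecting to {lb}
  obtain ⟨-, hT1P2⟩ := hT1 P2 hP2fin hP2hcf ⟨{lb}, hC⟩
  obtain ⟨S', hS'as, hS'proj⟩ := hT1P2 {lb} hC
  have hposP2 := (hpos P2 hP2fin hP2hcf).2
  have hS'pos : IsAnswerSetPos (tr' P2) S' :=
    (isAnswerSet_iff_pos _ _ hposP2).mp hS'as
  -- tr' {r} ⊆ tr' P2 by modularity
  have hsub : tr' ({r} : Set (Rule α)) ⊆ tr' P2 := by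
    rw [hmod P2 hP2fin hP2hcf]
    exact Set.subset_biUnion_of_mem (u := fun r0 => tr' {r0}) (show r ∈ P2 by rw [hP2]; simp)
  have hposT : ∀ r0 ∈ tr' ({r} : Set (Rule α)), r0.nbody = ∅ := by
    have := (hpos P1 hP1fin hP1hcf).2
    rwa [hP1] at this
  -- minimal model of tr' {r} below S'
  obtain ⟨M, hMS', hMpos⟩ := exists_min_model (tr' ({r} : Set (Rule α))) S'
    hposT hS'pos.1 (fun r0 hr0 => hS'pos.2.1 r0 (hsub hr0))
  have hMas : IsAnswerSet (tr' ({r} : Set (Rule α))) M :=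
    (isAnswerSet_iff_pos _ _ hposT).mpr hMpos
  obtain ⟨hT1P1, -⟩ := hT1 P1 hP1fin hP1hcf ⟨{la}, hA⟩
  have hMproj : IsAnswerSet P1 {l : Lit α | (enc l, true) ∈ M} := by
    apply hT1P1
    rwa [hP1]
  have hMeq : {l : Lit α | (enc l, true) ∈ M} = ({la} : Set (Lit α)) := hB _ hMproj
  have hencM : (enc la, true) ∈ M := by
    have : la ∈ {l : Lit α | (enc l, true) ∈ M} := by
      rw [hMeq]; exact rfl
    exact this
  have hencS' : (enc la, true) ∈ S' := hMS' hencM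
  have : la ∈ ({lb} : Set (Lit α)) := by
    rw [hS'proj]
    exact hencS'
  rw [Set.mem_singleton_iff] at this
  exact hlab this

end ASP
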